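/- Let q be a real number with 0 < q and q ≠ 1. Define E_{n,q} = [2]_q (1/(1−q))^n ∑_{l=0}^n C(n,l) (−1)^l / (1 + q^{l+1}). Then E_{0,q} = 1, and for every integer n ≥ 1 one has q·∑_{l=0}^n C(n,l) q^l E_{l,q} + E_{n,q} = 0; moreover for n = 0 one has q·E_{0,q} + E_{0,q} = [2]_q. (In umbral notation: q(qE+1)^n + E_{n,q} equals [2]_q if n = 0 and 0 if n ≠ 0.) -/

import Mathlib

/-- Kim's `q`-Euler numbers `E_{n,q} = [2]_q (1/(1-q))^n ∑_{l=0}^n C(n,l) (-1)^l / (1+q^{l+1})`. -/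
noncomputable def qEulerNumber (q : ℝ) (n : ℕ) : ℝ :=
  (1 + q) * (1 / (1 - q)) ^ n *
    ∑ l ∈ Finset.range (n + 1), (n.choose l : ℝ) * (-1) ^ l / (1 + q ^ (l + 1))

open Finset in
lemma qE_key (q : ℝ) (hq0 : 0 < q) (hq1 : q ≠ 1) (n : ℕ) :
    (∑ l ∈ Finset.range (n + 1), (n.choose l : ℝ) * q ^ l * qEulerNumber q l)
      = (1 + q) * (1 / (1 - q)) ^ n *
        ∑ j ∈ Finset.range (n + 1), (n.choose j : ℝ) * (-1) ^ j * q ^ j / (1 + q ^ (j + 1)) := by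
  have h1q : (1 : ℝ) - q ≠ 0 := sub_ne_zero.2 (Ne.symm hq1)
  have hden : ∀ k : ℕ, (1 : ℝ) + q ^ (k + 1) ≠ 0 := fun k => ne_of_gt (by positivity)
  have step1 : ∀ l ∈ Finset.range (n + 1),
      (n.choose l : ℝ) * q ^ l * qEulerNumber q l
        = ∑ j ∈ Finset.range (n + 1),
            (1 + q) * ((n.choose l : ℝ) * (l.choose j : ℝ) * (q / (1 - q)) ^ l *
              ((-1) ^ j / (1 + q ^ (j + 1)))) := by
    intro l hl
    rw [Finset.mem_range] at hl
    rw [qEulerNumber, Finset.mul_sum, Finset.mul_sum]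
    rw [← Finset.sum_subset (Finset.range_subset_range.2 (Nat.succ_le_of_lt hl))
      (by intro j hj hj2
          rw [Finset.mem_range, not_lt] at hj2
          have : l.choose j = 0 := Nat.choose_eq_zero_of_lt (by omega)
          simp [this])]
    apply Finset.sum_congr rfl
    intro j hj
    have hxp : (q / (1 - q)) ^ l = q ^ l * (1 / (1 - q)) ^ l := by
      rw [div_pow, div_pow, one_pow, mul_one_div]
    rw [hxp]
    field_simp
  rw [Finset.sum_congr rfl step1, Finset.sum_comm]
  rw [Finset.mul_sum]
  apply Finset.sum_congr rfl
  intro j hj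
  rw [Finset.mem_range, Nat.lt_succ_iff] at hj
  set x : ℝ := q / (1 - q) with hx
  have hinner : ∑ l ∈ Finset.range (n + 1),
      ((n.choose l : ℝ) * (l.choose j : ℝ) * x ^ l)
        = (n.choose j : ℝ) * x ^ j * (x + 1) ^ (n - j) := by
    rw [Finset.range_eq_Ico,
      ← Finset.sum_subset (Finset.Ico_subset_Ico (Nat.zero_le j) le_rfl :
        Finset.Ico j (n+1) ⊆ Finset.Ico 0 (n+1))
      (by intro l hl hl2
          rw [Finset.mem_Ico] at hl hl2
          have : l.choose j = 0 := Nat.choose_eq_zero_of_lt (by omega)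
          simp [this])]
    rw [Finset.sum_Ico_eq_sum_range]
    have hnj : n + 1 - j = (n - j) + 1 := by omega
    rw [hnj, add_pow, Finset.mul_sum]
    apply Finset.sum_congr rfl
    intro m hm
    rw [Finset.mem_range, Nat.lt_succ_iff] at hm
    have hch : (n.choose (j + m) : ℝ) * ((j + m).choose j : ℝ)
        = (n.choose j : ℝ) * ((n - j).choose m : ℝ) := by
      rw [← Nat.cast_mul, ← Nat.cast_mul, Nat.choose_mul (by omega),
        Nat.add_sub_cancel_left]
    rw [pow_add]
    calc (n.choose (j + m) : ℝ) * ((j + m).choose j : ℝ) * (x ^ j * x ^ m)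
        = (n.choose j : ℝ) * ((n - j).choose m : ℝ) * (x ^ j * x ^ m) := by rw [hch]
      _ = (n.choose j : ℝ) * x ^ j * (x ^ m * 1 ^ (n - j - m) * ((n - j).choose m : ℝ)) := by
          rw [one_pow]; ring
  -- now combine
  have hfold : ∑ l ∈ Finset.range (n + 1),
      (1 + q) * ((n.choose l : ℝ) * (l.choose j : ℝ) * x ^ l * ((-1) ^ j / (1 + q ^ (j + 1))))
      = (1 + q) * ((-1) ^ j / (1 + q ^ (j + 1))) *
          ∑ l ∈ Finset.range (n + 1), ((n.choose l : ℝ) * (l.choose j : ℝ) * x ^ l) := by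
    rw [Finset.mul_sum]
    apply Finset.sum_congr rfl
    intro l _
    ring
  rw [hfold, hinner]
  have hx1 : x + 1 = 1 / (1 - q) := by
    rw [hx]
    field_simp
    ring
  have hpow : (1 - q) ^ j * (1 - q) ^ (n - j) = (1 - q) ^ n := by
    rw [← pow_add]; congr 1; omega
  have hxj : x ^ j * (1 / (1 - q)) ^ (n - j) = q ^ j * (1 / (1 - q)) ^ n := by
    rw [hx, div_pow, div_pow, one_pow, div_mul_div_comm, mul_one, hpow]
    field_simp
    rw [← mul_pow, mul_one_div_cancel h1q, one_pow]
  rw [hx1]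
  calc (1 + q) * ((-1) ^ j / (1 + q ^ (j + 1))) *
        ((n.choose j : ℝ) * x ^ j * (1 / (1 - q)) ^ (n - j))
      = (1 + q) * ((-1) ^ j / (1 + q ^ (j + 1))) *
        ((n.choose j : ℝ) * (x ^ j * (1 / (1 - q)) ^ (n - j))) := by ring
    _ = (1 + q) * ((-1) ^ j / (1 + q ^ (j + 1))) *
        ((n.choose j : ℝ) * (q ^ j * (1 / (1 - q)) ^ n)) := by rw [hxj]
    _ = (1 + q) * (1 / (1 - q)) ^ n *
        ((n.choose j : ℝ) * (-1) ^ j * q ^ j / (1 + q ^ (j + 1))) := by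
        field_simp

/-- `E_{0,q} = 1`, `q(qE+1)^n + E_{n,q} = 0` for `n ≥ 1`, and `q(qE+1)^0 + E_{0,q} = [2]_q`. -/
theorem qEulerNumber_recurrence (q : ℝ) (hq0 : 0 < q) (hq1 : q ≠ 1) :
    qEulerNumber q 0 = 1 ∧
    (∀ n : ℕ, 1 ≤ n →
      q * (∑ l ∈ Finset.range (n + 1), (n.choose l : ℝ) * q ^ l * qEulerNumber q l)
        + qEulerNumber q n = 0) ∧
    q * qEulerNumber q 0 + qEulerNumber q 0 = 1 + q := by
  have hq : (1 : ℝ) + q ≠ 0 := by positivity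
  have hden : ∀ k : ℕ, (1 : ℝ) + q ^ (k + 1) ≠ 0 := fun k => ne_of_gt (by positivity)
  have h0 : qEulerNumber q 0 = 1 := by
    simp only [qEulerNumber, pow_zero, Finset.sum_range_one, Nat.choose_self,
      Nat.cast_one, one_mul, mul_one, zero_add, pow_one]
    field_simp
  refine ⟨h0, ?_, by rw [h0]; ring⟩
  intro n hn
  rw [qE_key q hq0 hq1 n, qEulerNumber]
  have halt : ∑ j ∈ Finset.range (n + 1), (n.choose j : ℝ) * (-1) ^ j = 0 := by
    have h := Int.alternating_sum_range_choose_of_ne (n := n) (by omega)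
    have h2 := congrArg (Int.cast : ℤ → ℝ) h
    push_cast at h2
    rw [← h2]
    exact Finset.sum_congr rfl fun j _ => by ring
  set A : ℝ := (1 + q) * (1 / (1 - q)) ^ n with hA
  calc q * (A * ∑ j ∈ Finset.range (n + 1), (n.choose j : ℝ) * (-1) ^ j * q ^ j / (1 + q ^ (j + 1)))
        + A * ∑ j ∈ Finset.range (n + 1), (n.choose j : ℝ) * (-1) ^ j / (1 + q ^ (j + 1))
      = A * ∑ j ∈ Finset.range (n + 1),
          (q * ((n.choose j : ℝ) * (-1) ^ j * q ^ j / (1 + q ^ (j + 1)))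
            + (n.choose j : ℝ) * (-1) ^ j / (1 + q ^ (j + 1))) := by
        rw [Finset.sum_add_distrib, ← Finset.mul_sum]
        ring
    _ = A * ∑ j ∈ Finset.range (n + 1), (n.choose j : ℝ) * (-1) ^ j := by
        congr 1
        apply Finset.sum_congr rfl
        intro j _
        have hd := hden j
        field_simp
        ring
    _ = 0 := by rw [halt, mul_zero]
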